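/- Let q be a real number with q > 0 and q ≠ 1, let N ≥ 1, and set λ = [N/2] = (q^{N/2} − q^{−N/2})/(q − q^{−1}). For 0 ≤ i ≤ N let b_i > 0 be the positive square root of binom_q(N, i) · {N/2 − i} / {N/2} (this quantity is positive). Let A be a real symmetric (N+1)×(N+1) matrix, indexed by 0,…,N, with A_{ij} = 0 whenever |i−j| ≠ 1, and suppose A·b = λ·b where b = (b_0, …, b_N). Then for every 0 ≤ i ≤ N−1: A_{i,i+1}² = [i+1]·[N−i] / ({N/2 − i}·{N/2 − i − 1}). (Second part of the Technical Lemma in Section 4.5.) -/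

import Mathlib

noncomputable section

/-- The quantum number `[x] = (q^x − q^{−x})/(q − q⁻¹)` for real `x` (real powers). -/
def qnum (q : ℝ) (x : ℝ) : ℝ := (q ^ x - q ^ (-x)) / (q - q⁻¹)

/-- `{x} = q^x + q^{−x}` (real powers). -/
def brace (q : ℝ) (x : ℝ) : ℝ := q ^ x + q ^ (-x)

/-- The quantum factorial `[n]! = ∏_{i=1}^n [i]`. -/
def qfact (q : ℝ) (n : ℕ) : ℝ := ∏ i ∈ Finset.range n, qnum q ((i : ℝ) + 1)

/-- The quantum binomial coefficient `binom_q(n,m)` for `0 ≤ m ≤ n`. -/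
def qbinom (q : ℝ) (n m : ℕ) : ℝ :=
  if m ≤ n then qfact q n / (qfact q m * qfact q (n - m)) else 0

lemma hden {q : ℝ} (hq0 : 0 < q) (hq1 : q ≠ 1) : q - q⁻¹ ≠ 0 := by
  intro h
  rw [sub_eq_zero] at h
  have h2 : q * q = 1 := by nth_rewrite 2 [h]; exact mul_inv_cancel₀ (ne_of_gt hq0)
  have h3 : (q - 1) * (q + 1) = 0 := by linear_combination h2
  rcases mul_eq_zero.mp h3 with h4 | h4
  · exact hq1 (by linarith)
  · linarith

lemma qnum_pos {q : ℝ} (hq0 : 0 < q) (hq1 : q ≠ 1) {x : ℝ} (hx : 0 < x) :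
    0 < qnum q x := by
  unfold qnum
  rcases lt_or_gt_of_ne hq1 with h | h
  · apply div_pos_of_neg_of_neg
    · have h1 : q ^ x < 1 := Real.rpow_lt_one hq0.le h hx
      have h2 : 1 < q ^ (-x) :=
        (Real.one_lt_rpow_iff_of_pos hq0).mpr (Or.inr ⟨h, by linarith⟩)
      linarith
    · have : 1 < q⁻¹ := (one_lt_inv₀ hq0).mpr h
      linarith
  · apply div_pos
    · have h1 : 1 < q ^ x := (Real.one_lt_rpow_iff_of_pos hq0).mpr (Or.inl ⟨h, hx⟩)
      have h2 : q ^ (-x) < 1 := Real.rpow_lt_one_of_one_lt_of_neg h (by linarith)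
      linarith
    · have : q⁻¹ < 1 := (inv_lt_one₀ hq0).mpr h
      linarith

lemma brace_pos {q : ℝ} (hq0 : 0 < q) (x : ℝ) : 0 < brace q x := by
  unfold brace
  have := Real.rpow_pos_of_pos hq0 x
  have := Real.rpow_pos_of_pos hq0 (-x)
  linarith

lemma qnum_mul_brace {q : ℝ} (hq0 : 0 < q) (a c : ℝ) :
    qnum q a * brace q c = qnum q (a + c) + qnum q (a - c) := by
  unfold qnum brace
  rw [div_mul_eq_mul_div, ← add_div]
  congr 1
  rw [Real.rpow_add hq0, show -(a + c) = -a + -c by ring, Real.rpow_add hq0,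
      show a - c = a + -c by ring, Real.rpow_add hq0,
      show -(a + -c) = -a + c by ring, Real.rpow_add hq0]
  ring

lemma qnum_zero (q : ℝ) : qnum q 0 = 0 := by simp [qnum]

lemma qfact_succ (q : ℝ) (n : ℕ) : qfact q (n + 1) = qfact q n * qnum q ((n : ℝ) + 1) :=
  Finset.prod_range_succ _ _

lemma qfact_pos {q : ℝ} (hq0 : 0 < q) (hq1 : q ≠ 1) (n : ℕ) : 0 < qfact q n :=
  Finset.prod_pos fun i _ => qnum_pos hq0 hq1 (by positivity)

lemma qbinom_pos {q : ℝ} (hq0 : 0 < q) (hq1 : q ≠ 1) {n m : ℕ} (h : m ≤ n) :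
    0 < qbinom q n m := by
  unfold qbinom
  rw [if_pos h]
  exact div_pos (qfact_pos hq0 hq1 _) (mul_pos (qfact_pos hq0 hq1 _) (qfact_pos hq0 hq1 _))

lemma qbinom_zero {q : ℝ} (hq0 : 0 < q) (hq1 : q ≠ 1) (n : ℕ) : qbinom q n 0 = 1 := by
  unfold qbinom
  rw [if_pos (Nat.zero_le n)]
  have : qfact q 0 = 1 := by simp [qfact]
  rw [this, one_mul]
  exact div_self (ne_of_gt (qfact_pos hq0 hq1 n))

lemma qbinom_rec {q : ℝ} (hq0 : 0 < q) (hq1 : q ≠ 1) {n i : ℕ} (h : i < n) :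
    qbinom q n (i + 1) * qnum q ((i : ℝ) + 1) = qbinom q n i * qnum q ((n : ℝ) - i) := by
  unfold qbinom
  rw [if_pos (by omega : i + 1 ≤ n), if_pos h.le]
  have e3 : qfact q (n - i) = qfact q (n - (i + 1)) * qnum q ((n : ℝ) - i) := by
    rw [show n - i = (n - (i + 1)) + 1 by omega, qfact_succ]
    congr 2
    push_cast [Nat.cast_sub h]
    ring
  rw [qfact_succ, e3]
  have h1 := (qfact_pos hq0 hq1 i).ne'
  have h2 := (qfact_pos hq0 hq1 (n - (i + 1))).ne'
  have h3 := (qfact_pos hq0 hq1 n).ne'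
  have h4 : qnum q ((i : ℝ) + 1) ≠ 0 := (qnum_pos hq0 hq1 (by positivity)).ne'
  have h5 : qnum q ((n : ℝ) - i) ≠ 0 := by
    have : (0:ℝ) < (n : ℝ) - i := by
      have : (i:ℝ) + 1 ≤ (n:ℝ) := by exact_mod_cast h
      linarith
    exact (qnum_pos hq0 hq1 this).ne'
  field_simp

/-- Second part of the Technical Lemma in Section 4.5: if the symmetric tridiagonal
matrix `A` has eigenvalue `[N/2]` with eigenvector `b`, `b_i² = binom_q(N,i)·{N/2−i}/{N/2}`,
`b_i > 0`, then `A_{i,i+1}² = [i+1]·[N−i]/({N/2−i}·{N/2−i−1})`. -/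
theorem tridiagonal_entries_squared (q : ℝ) (hq0 : 0 < q) (hq1 : q ≠ 1)
    (N : ℕ) (hN : 1 ≤ N)
    (b : Fin (N + 1) → ℝ)
    (hb : ∀ i : Fin (N + 1), 0 < b i ∧
      (b i) ^ 2 = qbinom q N (i : ℕ) * brace q ((N : ℝ) / 2 - (i : ℕ)) /
        brace q ((N : ℝ) / 2))
    (A : Matrix (Fin (N + 1)) (Fin (N + 1)) ℝ) (hsymm : A.IsSymm)
    (htri : ∀ i j : Fin (N + 1), |(i : ℤ) - (j : ℤ)| ≠ 1 → A i j = 0)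
    (heig : A.mulVec b = qnum q ((N : ℝ) / 2) • b) :
    ∀ i : ℕ, (hi : i < N) →
      (A ⟨i, by omega⟩ ⟨i + 1, by omega⟩) ^ 2 =
        qnum q ((i : ℝ) + 1) * qnum q ((N : ℝ) - i) /
          (brace q ((N : ℝ) / 2 - i) * brace q ((N : ℝ) / 2 - i - 1)) := by
  have hB : brace q ((N : ℝ) / 2) ≠ 0 := (brace_pos hq0 _).ne'
  have row : ∀ k : Fin (N + 1),
      (∑ j : Fin (N + 1), A k j * b j) = qnum q ((N : ℝ) / 2) * b k := by
    intro k
    have := congrFun heig k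
    simpa [Matrix.mulVec, dotProduct] using this
  have key : ∀ i : ℕ, (hi : i < N) →
      A ⟨i, by omega⟩ ⟨i + 1, by omega⟩ * (b ⟨i, by omega⟩ * b ⟨i + 1, by omega⟩) =
        qbinom q N i * qnum q ((N : ℝ) - i) / brace q ((N : ℝ) / 2) := by
    intro i
    induction i with
    | zero =>
      intro hi
      show A ⟨0, by omega⟩ ⟨1, by omega⟩ * (b ⟨0, by omega⟩ * b ⟨1, by omega⟩) =
        qbinom q N 0 * qnum q ((N : ℝ) - (0 : ℕ)) / brace q ((N : ℝ) / 2)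
      have hr := row ⟨0, by omega⟩
      rw [Finset.sum_eq_single (⟨1, by omega⟩ : Fin (N + 1))] at hr
      · have hb0 := (hb ⟨0, by omega⟩).2
        simp only [Fin.val_mk, Nat.cast_zero, sub_zero, qbinom_zero hq0 hq1, one_mul] at hb0
        rw [div_self hB] at hb0
        have hbr := qnum_mul_brace hq0 ((N : ℝ) / 2) ((N : ℝ) / 2)
        rw [show (N : ℝ) / 2 + (N : ℝ) / 2 = (N : ℝ) by ring,
            show (N : ℝ) / 2 - (N : ℝ) / 2 = 0 by ring, qnum_zero, add_zero] at hbr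
        simp only [Nat.cast_zero, sub_zero, qbinom_zero hq0 hq1, one_mul]
        rw [eq_div_iff hB]
        linear_combination (b ⟨0, by omega⟩ * brace q ((N : ℝ) / 2)) * hr + hbr
          + qnum q ((N : ℝ) / 2) * brace q ((N : ℝ) / 2) * hb0
      · intro j _ hj
        rw [htri _ _ ?_, zero_mul]
        have h1 : (j : ℕ) ≠ 1 := fun h => hj (Fin.ext h)
        intro heq
        rw [abs_eq (by norm_num : (0:ℤ) ≤ 1),
            show ((⟨0, by omega⟩ : Fin (N + 1)) : ℤ) = 0 from rfl,
            show (j : ℤ) = ((j : ℕ) : ℤ) from rfl] at heq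
        omega
      · intro h; exact absurd (Finset.mem_univ _) h
    | succ i IH =>
      intro hi
      show A ⟨i + 1, by omega⟩ ⟨i + 2, by omega⟩ *
          (b ⟨i + 1, by omega⟩ * b ⟨i + 2, by omega⟩) =
        qbinom q N (i + 1) * qnum q ((N : ℝ) - ((i + 1 : ℕ) : ℝ)) / brace q ((N : ℝ) / 2)
      have hi' : i < N := by omega
      have IH' := IH hi'
      have hr := row ⟨i + 1, by omega⟩
      have hsub : ({⟨i, by omega⟩, ⟨i + 2, by omega⟩} : Finset (Fin (N + 1))) ⊆
          Finset.univ := Finset.subset_univ _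
      have hzero : ∀ x ∈ (Finset.univ : Finset (Fin (N + 1))),
          x ∉ ({⟨i, by omega⟩, ⟨i + 2, by omega⟩} : Finset (Fin (N + 1))) →
          A ⟨i + 1, by omega⟩ x * b x = 0 := by
        intro x _ hx
        simp only [Finset.mem_insert, Finset.mem_singleton] at hx
        push_neg at hx
        rw [htri _ _ ?_, zero_mul]
        have h1 : (x : ℕ) ≠ i := fun h => hx.1 (Fin.ext h)
        have h2 : (x : ℕ) ≠ i + 2 := fun h => hx.2 (Fin.ext h)
        intro heq
        rw [abs_eq (by norm_num : (0:ℤ) ≤ 1),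
            show ((⟨i + 1, by omega⟩ : Fin (N + 1)) : ℤ) = (i : ℤ) + 1 by push_cast; rfl,
            show (x : ℤ) = ((x : ℕ) : ℤ) from rfl] at heq
        omega
      rw [← Finset.sum_subset hsub hzero, Finset.sum_pair (by
        intro h
        have := congrArg Fin.val h
        simp at this)] at hr
      have hsymEq : A ⟨i + 1, by omega⟩ ⟨i, by omega⟩ =
          A ⟨i, by omega⟩ ⟨i + 1, by omega⟩ := (hsymm.apply _ _)
      have hbsq := (hb ⟨i + 1, by omega⟩).2
      simp only [Fin.val_mk] at hbsq
      rw [show (((i : ℕ) + 1 : ℕ) : ℝ) = (i : ℝ) + 1 by push_cast; ring,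
          eq_div_iff hB] at hbsq
      have hbr := qnum_mul_brace hq0 ((N : ℝ) / 2) ((N : ℝ) / 2 - ((i : ℝ) + 1))
      rw [show (N : ℝ) / 2 + ((N : ℝ) / 2 - ((i : ℝ) + 1)) = (N : ℝ) - ((i : ℝ) + 1) by ring,
          show (N : ℝ) / 2 - ((N : ℝ) / 2 - ((i : ℝ) + 1)) = (i : ℝ) + 1 by ring] at hbr
      have hrec := qbinom_rec hq0 hq1 hi'
      rw [show (((i : ℕ) + 1 : ℕ) : ℝ) = (i : ℝ) + 1 by push_cast; ring,
        eq_div_iff hB]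
      rw [eq_div_iff hB] at IH'
      linear_combination (b ⟨i + 1, by omega⟩ * brace q ((N : ℝ) / 2)) * hr
        - (b ⟨i, by omega⟩ * b ⟨i + 1, by omega⟩ * brace q ((N : ℝ) / 2)) * hsymEq
        - IH' + qnum q ((N : ℝ) / 2) * hbsq
        + qbinom q N (i + 1) * hbr + hrec
  intro i hi
  have hk := key i hi
  have hrec := qbinom_rec hq0 hq1 hi
  have hC : qbinom q N i ≠ 0 := (qbinom_pos hq0 hq1 hi.le).ne'
  have hC' : qbinom q N (i + 1) ≠ 0 := (qbinom_pos hq0 hq1 (by omega)).ne'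
  have hR : brace q ((N : ℝ) / 2 - i) ≠ 0 := (brace_pos hq0 _).ne'
  have hS : brace q ((N : ℝ) / 2 - i - 1) ≠ 0 := (brace_pos hq0 _).ne'
  have hb1 := (hb ⟨i, by omega⟩).2
  have hb2 := (hb ⟨i + 1, by omega⟩).2
  simp only [Fin.val_mk] at hb1 hb2
  rw [eq_div_iff hB] at hb1
  rw [show (((i : ℕ) + 1 : ℕ) : ℝ) = (i : ℝ) + 1 by push_cast; ring,
      show (N : ℝ) / 2 - ((i : ℝ) + 1) = (N : ℝ) / 2 - i - 1 by ring,
      eq_div_iff hB] at hb2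
  have hsq : (A ⟨i, by omega⟩ ⟨i + 1, by omega⟩) ^ 2 *
      ((b ⟨i, by omega⟩) ^ 2 * (b ⟨i + 1, by omega⟩) ^ 2) *
      (brace q ((N : ℝ) / 2)) ^ 2 =
      (qbinom q N i * qnum q ((N : ℝ) - i)) ^ 2 := by
    rw [show (A ⟨i, by omega⟩ ⟨i + 1, by omega⟩) ^ 2 *
      ((b ⟨i, by omega⟩) ^ 2 * (b ⟨i + 1, by omega⟩) ^ 2) *
      (brace q ((N : ℝ) / 2)) ^ 2 =
      (A ⟨i, by omega⟩ ⟨i + 1, by omega⟩ * (b ⟨i, by omega⟩ * b ⟨i + 1, by omega⟩)) ^ 2 *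
      (brace q ((N : ℝ) / 2)) ^ 2 by ring, hk]
    field_simp
  rw [eq_div_iff (mul_ne_zero hR hS)]
  refine mul_left_cancel₀ (mul_ne_zero hC hC') ?_
  linear_combination hsq
    - ((A ⟨i, by omega⟩ ⟨i + 1, by omega⟩) ^ 2 * (b ⟨i + 1, by omega⟩) ^ 2 *
        brace q ((N : ℝ) / 2)) * hb1
    - ((A ⟨i, by omega⟩ ⟨i + 1, by omega⟩) ^ 2 * qbinom q N i *
        brace q ((N : ℝ) / 2 - i)) * hb2
    - (qbinom q N i * qnum q ((N : ℝ) - i)) * hrec
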